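/- Let α be an infinite ordinal (or cardinal) and define the α-topology on Sym(Ω) by basic open sets G_{ā,b̄} = {g | g(ā) = b̄} for tuples ā, b̄ ∈ Ω^β with β < α. A subgroup H of Sym(Ω) is closed in the α-topology if and only if H is the automorphism group of a relational structure on Ω all of whose relations have arity less than α. -/

import Mathlib

/-- The α-topology on `Equiv.Perm Ω`: basic open sets are
`{g | g ∘ a = b}` for tuples `a b : ι → Ω` of length (cardinality) `< α`. -/
def alphaTop (Ω : Type) (α : Cardinal.{0}) : TopologicalSpace (Equiv.Perm Ω) :=
  TopologicalSpace.generateFrom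
    {U | ∃ (ι : Type) (_ : Cardinal.mk ι < α) (a b : ι → Ω),
      U = {g : Equiv.Perm Ω | ∀ i, g (a i) = b i}}

/-- Basis extraction for a subbasis closed under binary intersection containing univ. -/
lemma gen_mem_aux {X : Type*} {S : Set (Set X)}
    (hinter : ∀ U ∈ S, ∀ V ∈ S, U ∩ V ∈ S) (huniv : Set.univ ∈ S)
    {U : Set X} (hU : TopologicalSpace.GenerateOpen S U) :
    ∀ x ∈ U, ∃ B ∈ S, x ∈ B ∧ B ⊆ U := by
  induction hU with
  | basic V hV => exact fun x hx => ⟨V, hV, hx, le_refl _⟩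
  | univ => exact fun x _ => ⟨Set.univ, huniv, trivial, le_refl _⟩
  | inter V W _ _ ihV ihW =>
      intro x hx
      obtain ⟨B₁, hB₁, hxB₁, hB₁V⟩ := ihV x hx.1
      obtain ⟨B₂, hB₂, hxB₂, hB₂W⟩ := ihW x hx.2
      exact ⟨B₁ ∩ B₂, hinter _ hB₁ _ hB₂, ⟨hxB₁, hxB₂⟩,
        fun y hy => ⟨hB₁V hy.1, hB₂W hy.2⟩⟩
  | sUnion 𝒮 _ ih =>
      rintro x ⟨V, hV, hxV⟩
      obtain ⟨B, hB, hxB, hBV⟩ := ih V hV x hxV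
      exact ⟨B, hB, hxB, hBV.trans (Set.subset_sUnion_of_mem hV)⟩

/-- Index type for the orbit relational structure: a subset of `α.out` of cardinality `< α`
(the arity), together with a tuple. -/
def OrbIdx (Ω : Type) (α : Cardinal.{0}) : Type :=
  Σ s : {s : Set (Quotient.out α) // Cardinal.mk s < α}, ((s.1 : Set (Quotient.out α)) → Ω)

/-- Arity of each orbit relation. -/
def OrbAr (Ω : Type) (α : Cardinal.{0}) : OrbIdx Ω α → Type :=
  fun i => (i.1.1 : Set (Quotient.out α))

theorem stmt_5 (Ω : Type) (α : Cardinal.{0}) (hα : Cardinal.aleph0 ≤ α)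
    (H : Subgroup (Equiv.Perm Ω)) :
    @IsClosed _ (alphaTop Ω α) (H : Set (Equiv.Perm Ω)) ↔
      ∃ (ι : Type) (β : ι → Type) (_ : ∀ i, Cardinal.mk (β i) < α)
        (R : (i : ι) → Set (β i → Ω)),
        (H : Set (Equiv.Perm Ω)) =
          {g : Equiv.Perm Ω | ∀ i (t : β i → Ω), t ∈ R i ↔ (fun j => g (t j)) ∈ R i} := by
  set S : Set (Set (Equiv.Perm Ω)) :=
    {U | ∃ (ι : Type) (_ : Cardinal.mk ι < α) (a b : ι → Ω),
      U = {g : Equiv.Perm Ω | ∀ i, g (a i) = b i}} with hS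
  have hinter : ∀ U ∈ S, ∀ V ∈ S, U ∩ V ∈ S := by
    rintro _ ⟨ι₁, h₁, a₁, b₁, rfl⟩ _ ⟨ι₂, h₂, a₂, b₂, rfl⟩
    refine ⟨ι₁ ⊕ ι₂, ?_, Sum.elim a₁ a₂, Sum.elim b₁ b₂, ?_⟩
    · simpa using Cardinal.add_lt_of_lt hα h₁ h₂
    · ext g
      constructor
      · rintro ⟨hg₁, hg₂⟩ (i | i) <;> [exact hg₁ i; exact hg₂ i]
      · intro h
        exact ⟨fun i => h (Sum.inl i), fun i => h (Sum.inr i)⟩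
  have huniv : Set.univ ∈ S := by
    refine ⟨PEmpty, ?_, PEmpty.elim, PEmpty.elim, ?_⟩
    · simpa using lt_of_lt_of_le Cardinal.aleph0_pos hα
    · ext g; simp
  constructor
  · -- closed ⇒ automorphism group of orbit structure
    intro hcl
    refine ⟨OrbIdx Ω α, OrbAr Ω α,
      fun i => i.1.2,
      fun i => {t | ∃ h ∈ H, t = fun j => h (i.2 j)}, ?_⟩
    ext g
    constructor
    · intro hg i t
      constructor
      · rintro ⟨h, hh, rfl⟩
        exact ⟨g * h, mul_mem hg hh, rfl⟩
      · rintro ⟨h, hh, hht⟩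
        refine ⟨g⁻¹ * h, mul_mem (inv_mem hg) hh, ?_⟩
        funext j
        have := congrFun hht j
        simp only [Equiv.Perm.mul_apply] at this ⊢
        rw [← this]; simp
    · intro hg
      by_contra hgH
      have hopen : TopologicalSpace.GenerateOpen S ((H : Set (Equiv.Perm Ω))ᶜ) :=
        hcl.isOpen_compl
      obtain ⟨B, hBS, hgB, hBsub⟩ := gen_mem_aux hinter huniv hopen g hgH
      obtain ⟨ι', hι', a, b, rfl⟩ := hBS
      -- embed `ι'` into `α.out` and build the orbit relation for the tuple `a`
      have hle : Cardinal.mk ι' ≤ Cardinal.mk (Quotient.out α) := by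
        rw [Cardinal.mk_out]; exact hι'.le
      obtain ⟨f⟩ := Cardinal.le_def _ _ |>.mp hle
      let e : ι' ≃ Set.range ⇑f := Equiv.ofInjective ⇑f f.injective
      have hs : Cardinal.mk (Set.range ⇑f) < α := by
        rw [Cardinal.mk_range_eq _ f.injective]; exact hι'
      set i : OrbIdx Ω α := ⟨⟨Set.range ⇑f, hs⟩, fun j => a (e.symm j)⟩ with hi
      have h1 : (fun j => a (e.symm j)) ∈
          {t : OrbAr Ω α i → Ω | ∃ h ∈ H, t = fun j => h (i.2 j)} := by
        refine ⟨1, one_mem H, ?_⟩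
        funext j
        rfl
      obtain ⟨h, hh, hht⟩ := (hg i _).mp h1
      -- `h` agrees with `g` on `a`, hence `h ∈ B ∩ H`, contradiction
      have hmemB : h ∈ {g : Equiv.Perm Ω | ∀ k, g (a k) = b k} := by
        intro k
        have h2 := congrFun hht (e k)
        change g (a (e.symm (e k))) = h (a (e.symm (e k))) at h2
        simp only [hi, Equiv.symm_apply_apply] at h2
        rw [← h2]
        exact hgB k
      exact hBsub hmemB hh
  · -- automorphism group ⇒ closed
    rintro ⟨ι, β, hβ, R, hH⟩
    letI := alphaTop Ω α
    refine { isOpen_compl := ?_ }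
    show TopologicalSpace.GenerateOpen S ((H : Set (Equiv.Perm Ω))ᶜ)
    have hcup : (H : Set (Equiv.Perm Ω))ᶜ =
        ⋃₀ {B | B ∈ S ∧ B ⊆ (H : Set (Equiv.Perm Ω))ᶜ} := by
      apply Set.Subset.antisymm
      · intro g hg
        have hg' : ∃ (i : ι) (t : β i → Ω), ¬(t ∈ R i ↔ (fun j => g (t j)) ∈ R i) := by
          by_contra hcon
          push_neg at hcon
          exact hg (by rw [hH]; exact fun i t => hcon i t)
        obtain ⟨i, t, hit⟩ := hg'
        refine ⟨{h : Equiv.Perm Ω | ∀ j, h (t j) = g (t j)},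
          ⟨⟨β i, hβ i, t, fun j => g (t j), rfl⟩, ?_⟩, fun j => rfl⟩
        intro h hh hhH
        apply hit
        have h1 : (∀ i (t : β i → Ω), t ∈ R i ↔ (fun j => h (t j)) ∈ R i) := by
          have := hhH; rw [hH] at this; exact this
        have h2 := h1 i t
        have h3 : (fun j => h (t j)) = fun j => g (t j) := funext hh
        rw [h3] at h2
        exact h2
      · rintro g ⟨B, ⟨_, hBsub⟩, hgB⟩
        exact hBsub hgB
    rw [hcup]
    exact TopologicalSpace.GenerateOpen.sUnion _ (fun B hB => .basic B hB.1)
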